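/- For every n ≥ 0, r_n = (Σ_{k=0}^{n} binomial(2n-k, n)) mod 2, where r_n is the Rueppel sequence. -/

import Mathlib

open Classical

/-- The Rueppel sequence: `r n = 1` iff `n + 1` is a power of `2`. -/

noncomputable def rueppel (n : ℕ) : ℕ := if ∃ k : ℕ, n + 1 = 2 ^ k then 1 else 0

lemma lucas_step (N K : ℕ) :
    Nat.choose N K % 2 = (Nat.choose (N % 2) (K % 2) * Nat.choose (N / 2) (K / 2)) % 2 := by
  haveI : Fact (Nat.Prime 2) := ⟨Nat.prime_two⟩
  exact Choose.choose_modEq_choose_mod_mul_choose_div_nat (p := 2)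

lemma central_odd (m : ℕ) : Nat.choose (2 * m) m % 2 = if m = 0 then 1 else 0 := by
  induction m using Nat.strong_induction_on with
  | _ m ih =>
    rcases Nat.even_or_odd m with ⟨t, ht⟩ | ⟨t, ht⟩
    · subst ht
      rcases Nat.eq_zero_or_pos t with rfl | hpos
      · simp
      · have h := lucas_step (2 * (t + t)) (t + t)
        have h1 : (2 * (t + t)) % 2 = 0 := by omega
        have h2 : (t + t) % 2 = 0 := by omega
        have h3 : (2 * (t + t)) / 2 = t + t := by omega
        have h4 : (t + t) / 2 = t := by omega
        rw [h1, h2, h3, h4] at h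
        have h5 : t + t = 2 * t := by ring
        rw [h, h5, Nat.choose_zero_right, one_mul, ih t (by omega)]
        simp [show t ≠ 0 by omega, show t + t ≠ 0 by omega]
    · subst ht
      have h := lucas_step (2 * (2 * t + 1)) (2 * t + 1)
      have h1 : (2 * (2 * t + 1)) % 2 = 0 := by omega
      have h2 : (2 * t + 1) % 2 = 1 := by omega
      have hc : Nat.choose 0 1 = 0 := rfl
      rw [h1, h2, hc, zero_mul] at h
      rw [h]
      simp

lemma key (n : ℕ) : Nat.choose (2 * n + 1) (n + 1) % 2 = rueppel n := by
  induction n using Nat.strong_induction_on with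
  | _ n ih =>
    rcases Nat.even_or_odd n with ⟨m, hm⟩ | ⟨m, hm⟩
    · -- n = 2m
      have hn : n = 2 * m := by omega
      subst hn
      have h := lucas_step (2 * (2 * m) + 1) (2 * m + 1)
      have h1 : (2 * (2 * m) + 1) % 2 = 1 := by omega
      have h2 : (2 * m + 1) % 2 = 1 := by omega
      have h3 : (2 * (2 * m) + 1) / 2 = 2 * m := by omega
      have h4 : (2 * m + 1) / 2 = m := by omega
      rw [h1, h2, h3, h4, Nat.choose_self, one_mul] at h
      rw [h, central_odd m, rueppel]
      have : (∃ k, 2 * m + 1 = 2 ^ k) ↔ m = 0 := by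
        constructor
        · rintro ⟨k, hk⟩
          cases k with
          | zero => omega
          | succ k => exfalso; have : 2 ∣ 2 ^ (k + 1) := dvd_pow_self 2 (by omega); omega
        · rintro rfl; exact ⟨0, by norm_num⟩
      simp only [this]
    · -- n = 2m + 1
      subst hm
      have h := lucas_step (2 * (2 * m + 1) + 1) (2 * m + 1 + 1)
      have h1 : (2 * (2 * m + 1) + 1) % 2 = 1 := by omega
      have h2 : (2 * m + 1 + 1) % 2 = 0 := by omega
      have h3 : (2 * (2 * m + 1) + 1) / 2 = 2 * m + 1 := by omega
      have h4 : (2 * m + 1 + 1) / 2 = m + 1 := by omega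
      rw [h1, h2, h3, h4, Nat.choose_zero_right, one_mul] at h
      rw [h, ih m (by omega)]
      unfold rueppel
      have : (∃ k, m + 1 = 2 ^ k) ↔ (∃ k, 2 * m + 1 + 1 = 2 ^ k) := by
        constructor
        · rintro ⟨k, hk⟩; exact ⟨k + 1, by rw [pow_succ]; omega⟩
        · rintro ⟨k, hk⟩
          cases k with
          | zero => omega
          | succ k => exact ⟨k, by rw [pow_succ] at hk; omega⟩
      simp only [this]

lemma hockey (n j : ℕ) :
    ∑ k ∈ Finset.range j, Nat.choose (n + k) n = Nat.choose (n + j) (n + 1) := by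
  induction j with
  | zero => simp [Nat.choose_eq_zero_of_lt]
  | succ j ih =>
    rw [Finset.sum_range_succ, ih, ← Nat.add_assoc, Nat.choose_succ_succ' (n + j) n]
    omega

theorem rueppel_vertical_half (n : ℕ) :
    rueppel n = (∑ k ∈ Finset.range (n + 1), Nat.choose (2 * n - k) n) % 2 := by
  have hs : ∑ k ∈ Finset.range (n + 1), Nat.choose (2 * n - k) n
      = ∑ k ∈ Finset.range (n + 1), Nat.choose (n + k) n := by
    rw [← Finset.sum_range_reflect]
    apply Finset.sum_congr rfl
    intro k hk
    simp only [Finset.mem_range] at hk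
    congr 1
    omega
  rw [hs, hockey n (n + 1)]
  have : n + (n + 1) = 2 * n + 1 := by ring
  rw [this, key n]
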